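/- For every natural number i and every real number ξ with |ξ| < 1, (1-ξ)^{-i-1/2} = ∑_{a=0}^{∞} [C(2a+2i, a+i) · C(a+i, i) / (4^a · C(2i, i))] · ξ^a. -/

import Mathlib

open Finset

noncomputable def dd (i : ℕ) : ℕ → ℝ
  | 0 => 1
  | a + 1 => dd i a * ((2 * i + 1 + 2 * a) / (2 * (a + 1)))

lemma dd_zero (i : ℕ) : dd i 0 = 1 := rfl

lemma dd_succ (i a : ℕ) : dd i (a + 1) = dd i a * ((2 * i + 1 + 2 * a) / (2 * (a + 1))) := rfl

lemma dd_pos (i a : ℕ) : 0 < dd i a := by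
  induction a with
  | zero => norm_num [dd_zero]
  | succ a ih => rw [dd_succ]; positivity

lemma dd_rec (i a : ℕ) : 2 * ((a : ℝ) + 1) * dd i (a + 1) = (2 * i + 1 + 2 * a) * dd i a := by
  rw [dd_succ]
  field_simp

lemma dd_shift (i a : ℕ) : (2 * (i : ℝ) + 1) * dd (i + 1) a = (2 * i + 1 + 2 * a) * dd i a := by
  induction a with
  | zero => simp [dd_zero]
  | succ a ih =>
      rw [dd_succ, dd_succ]
      push_cast
      have h : ((a : ℝ) + 1) ≠ 0 := by positivity
      field_simp
      nlinarith [ih]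

lemma dd_add (i a : ℕ) : dd (i + 1) (a + 1) = dd (i + 1) a + dd i (a + 1) := by
  have h := dd_shift i a
  rw [dd_succ, dd_succ]
  push_cast
  have h2 : ((a : ℝ) + 1) ≠ 0 := by positivity
  field_simp
  nlinarith [h]

lemma sum_dd (i a : ℕ) : ∑ b ∈ range (a + 1), dd i b = dd (i + 1) a := by
  induction a with
  | zero => simp [dd_zero]
  | succ a ih => rw [sum_range_succ, ih, ← dd_add]

lemma dd_antitone (a : ℕ) : dd 0 (a + 1) ≤ dd 0 a := by
  rw [dd_succ]
  have h1 := dd_pos 0 a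
  have h2 : ((2 * (0:ℕ) : ℝ) + 1 + 2 * a) / (2 * ((a:ℝ) + 1)) ≤ 1 := by
    rw [div_le_one (by positivity)]
    push_cast; linarith
  nlinarith

lemma dd_le_choose (i a : ℕ) : dd i a ≤ ((a + i).choose i : ℝ) := by
  induction a with
  | zero => simp [dd_zero]
  | succ a ih =>
      have key : ((a:ℝ) + 1) * ((a + 1 + i).choose i : ℝ) = ((a:ℝ) + i + 1) * ((a + i).choose i : ℝ) := by
        have h := Nat.choose_mul_succ_eq (a + i) i
        have h2 : a + i + 1 - i = a + 1 := by omega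
        rw [h2] at h
        have := congrArg (fun n : ℕ => (n : ℝ)) h
        push_cast at this
        push_cast
        rw [show a + 1 + i = a + i + 1 from by omega]
        linarith [this]
      have ha : (0:ℝ) < (a:ℝ) + 1 := by positivity
      rw [dd_succ]
      rw [← mul_le_mul_iff_right₀ ha]
      rw [show (a:ℕ) + 1 + i = a + 1 + i from rfl]
      rw [key]
      have hr : ((a:ℝ)+1) * (dd i a * ((2 * i + 1 + 2 * a) / (2 * (a + 1)))) = dd i a * ((2 * i + 1 + 2 * a)/2) := by
        field_simp
      rw [hr]
      have hc : (0:ℝ) ≤ ((a + i).choose i : ℝ) := by positivity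
      have hd := dd_pos i a
      have : dd i a * ((2 * (i:ℝ) + 1 + 2 * a)/2) ≤ ((a + i).choose i : ℝ) * ((2 * (i:ℝ) + 1 + 2 * a)/2) := by
        apply mul_le_mul_of_nonneg_right ih; positivity
      refine this.trans ?_
      have : (2 * (i:ℝ) + 1 + 2 * a)/2 ≤ (a:ℝ) + i + 1 := by linarith
      nlinarith

lemma refl_sum (f : ℕ → ℝ) (n : ℕ) :
    2 * ∑ b ∈ range (n + 1), (b : ℝ) * (f b * f (n - b)) =
      n * ∑ b ∈ range (n + 1), f b * f (n - b) := by
  have hrefl : ∑ b ∈ range (n + 1), (b : ℝ) * (f b * f (n - b)) =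
      ∑ b ∈ range (n + 1), ((n : ℝ) - b) * (f b * f (n - b)) := by
    rw [← Finset.sum_range_reflect (fun b => (b : ℝ) * (f b * f (n - b))) (n + 1)]
    refine Finset.sum_congr rfl fun b hb => ?_
    have hb' : b ≤ n := Nat.lt_succ_iff.mp (Finset.mem_range.mp hb)
    simp only [Nat.add_sub_cancel]
    rw [Nat.sub_sub_self hb', Nat.cast_sub hb']
    ring
  calc 2 * ∑ b ∈ range (n + 1), (b : ℝ) * (f b * f (n - b))
      = ∑ b ∈ range (n + 1), (b : ℝ) * (f b * f (n - b))
        + ∑ b ∈ range (n + 1), ((n : ℝ) - b) * (f b * f (n - b)) := by rw [← hrefl]; ring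
    _ = ∑ b ∈ range (n + 1), ((b : ℝ) + ((n : ℝ) - b)) * (f b * f (n - b)) := by
        rw [← Finset.sum_add_distrib]; refine Finset.sum_congr rfl fun b _ => ?_; ring
    _ = n * ∑ b ∈ range (n + 1), f b * f (n - b) := by
        rw [Finset.mul_sum]; refine Finset.sum_congr rfl fun b _ => ?_; ring

lemma conv0 (n : ℕ) : ∑ b ∈ range (n + 1), dd 0 b * dd 0 (n - b) = 1 := by
  induction n with
  | zero => simp [dd_zero]
  | succ n ih =>
      have hstep : ((n : ℝ) + 1) * ∑ b ∈ range (n + 2), dd 0 b * dd 0 (n + 1 - b) =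
          ((n : ℝ) + 1) * ∑ b ∈ range (n + 1), dd 0 b * dd 0 (n - b) := by
        have h1 : 2 * ∑ b ∈ range (n + 2), (b : ℝ) * (dd 0 b * dd 0 (n + 1 - b)) =
            (n + 1 : ℕ) * ∑ b ∈ range (n + 2), dd 0 b * dd 0 (n + 1 - b) := refl_sum (dd 0) (n + 1)
        have h2 : 2 * ∑ b ∈ range (n + 1), (b : ℝ) * (dd 0 b * dd 0 (n - b)) =
            n * ∑ b ∈ range (n + 1), dd 0 b * dd 0 (n - b) := refl_sum (dd 0) n
        -- shift the first weighted sum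
        have h3 : ∑ b ∈ range (n + 2), (b : ℝ) * (dd 0 b * dd 0 (n + 1 - b)) =
            ∑ c ∈ range (n + 1), ((c : ℝ) + 1) * (dd 0 (c + 1) * dd 0 (n - c)) := by
          rw [Finset.sum_range_succ' (fun b => (b : ℝ) * (dd 0 b * dd 0 (n + 1 - b))) (n + 1)]
          simp
        have h4 : ∀ c : ℕ, ((c : ℝ) + 1) * (dd 0 (c + 1) * dd 0 (n - c)) =
            ((2 * c + 1 : ℝ) / 2) * (dd 0 c * dd 0 (n - c)) := by
          intro c
          have := dd_rec 0 c
          push_cast at this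
          nlinarith [this, dd_pos 0 (n - c)]
        have h5 : ∑ c ∈ range (n + 1), ((c : ℝ) + 1) * (dd 0 (c + 1) * dd 0 (n - c)) =
            ∑ c ∈ range (n + 1), (c : ℝ) * (dd 0 c * dd 0 (n - c))
              + (1 / 2) * ∑ c ∈ range (n + 1), dd 0 c * dd 0 (n - c) := by
          rw [Finset.mul_sum, ← Finset.sum_add_distrib]
          refine Finset.sum_congr rfl fun c _ => ?_
          rw [h4 c]; ring
        push_cast at h1
        linarith [h1, h2, h3 ▸ h5]
      have hne : ((n : ℝ) + 1) ≠ 0 := by positivity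
      have := mul_left_cancel₀ hne hstep
      rw [this, ih]

lemma summable_dd_norm (i : ℕ) {ξ : ℝ} (hξ : |ξ| < 1) :
    Summable fun a => ‖dd i a * ξ ^ a‖ := by
  have hmaj : Summable fun a : ℕ => ((a + i).choose i : ℝ) * |ξ| ^ a := by
    have : ‖|ξ|‖ < 1 := by rwa [Real.norm_eq_abs, abs_abs]
    exact summable_choose_mul_geometric_of_norm_lt_one i this
  refine Summable.of_nonneg_of_le (fun a => norm_nonneg _) (fun a => ?_) hmaj
  rw [Real.norm_eq_abs, abs_mul, abs_pow]
  have h1 : |dd i a| = dd i a := abs_of_pos (dd_pos i a)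
  rw [h1]
  exact mul_le_mul_of_nonneg_right (dd_le_choose i a) (by positivity)

lemma summable_dd (i : ℕ) {ξ : ℝ} (hξ : |ξ| < 1) :
    Summable fun a => dd i a * ξ ^ a :=
  (summable_dd_norm i hξ).of_norm

lemma tsum_dd_pos {ξ : ℝ} (hξ : |ξ| < 1) : 0 < ∑' a, dd 0 a * ξ ^ a := by
  set f : ℕ → ℝ := fun a => dd 0 a * ξ ^ a with hf
  have hsum : Summable f := summable_dd 0 hξ
  have he : Summable fun k => f (2 * k) :=
    hsum.comp_injective (fun x y h => by omega)
  have ho : Summable fun k => f (2 * k + 1) :=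
    hsum.comp_injective (fun x y h => by omega)
  have hS : ∑' a, f a = (∑' k, f (2 * k)) + ∑' k, f (2 * k + 1) :=
    (tsum_even_add_odd he ho).symm
  rw [hS, ← Summable.tsum_add he ho]
  have hterm : ∀ k, 0 ≤ f (2 * k) + f (2 * k + 1) := by
    intro k
    have h1 : f (2 * k) + f (2 * k + 1) =
        ξ ^ (2 * k) * (dd 0 (2 * k) + dd 0 (2 * k + 1) * ξ) := by
      simp only [hf]; rw [pow_succ]; ring
    rw [h1]
    have hsq : 0 ≤ ξ ^ (2 * k) := by rw [pow_mul]; positivity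
    have hd1 := dd_pos 0 (2 * k + 1)
    have hd2 := dd_antitone (2 * k)
    have hx : -|ξ| ≤ ξ := neg_abs_le ξ
    have : dd 0 (2 * k + 1) * ξ ≥ -(dd 0 (2 * k + 1) * |ξ|) := by nlinarith
    have h2 : 0 ≤ dd 0 (2 * k) + dd 0 (2 * k + 1) * ξ := by nlinarith [abs_nonneg ξ]
    positivity
  have h0 : 0 < f 0 + f 1 := by
    have : dd 0 1 = 1 / 2 := by rw [dd_succ]; norm_num [dd_zero]
    simp only [hf, pow_zero, pow_one, dd_zero, this]
    have : -1 < ξ := neg_lt_of_abs_lt hξ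
    linarith
  exact Summable.tsum_pos (he.add ho) hterm 0 h0

lemma tsum_dd (i : ℕ) {ξ : ℝ} (hξ : |ξ| < 1) :
    ∑' a, dd i a * ξ ^ a = (1 - ξ) ^ (-((i : ℝ) + 1 / 2)) := by
  have hξ' : ‖ξ‖ < 1 := by rwa [Real.norm_eq_abs]
  have h1ξ : 0 < 1 - ξ := by
    have := abs_lt.mp hξ; linarith [this.2]
  induction i with
  | zero =>
      set S := ∑' a, dd 0 a * ξ ^ a with hSdef
      have hsq : S * S = (1 - ξ)⁻¹ := by
        have hnorm : Summable fun a => ‖dd 0 a * ξ ^ a‖ := summable_dd_norm 0 hξ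
        rw [hSdef, tsum_mul_tsum_eq_tsum_sum_range_of_summable_norm hnorm hnorm]
        have : ∀ n : ℕ, ∑ b ∈ range (n + 1), (dd 0 b * ξ ^ b) * (dd 0 (n - b) * ξ ^ (n - b)) = ξ ^ n := by
          intro n
          have : ∀ b ∈ range (n + 1), (dd 0 b * ξ ^ b) * (dd 0 (n - b) * ξ ^ (n - b)) =
              (dd 0 b * dd 0 (n - b)) * ξ ^ n := by
            intro b hb
            have hb' : b ≤ n := Nat.lt_succ_iff.mp (Finset.mem_range.mp hb)
            have hp : ξ ^ b * ξ ^ (n - b) = ξ ^ n := by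
              rw [← pow_add, Nat.add_sub_cancel' hb']
            rw [← hp]; ring
          rw [Finset.sum_congr rfl this, ← Finset.sum_mul, conv0, one_mul]
        rw [tsum_congr this, tsum_geometric_of_norm_lt_one hξ']
      have hr : (1 - ξ) ^ (-((0 : ℕ) : ℝ) - 1 / 2) * (1 - ξ) ^ (-((0 : ℕ) : ℝ) - 1 / 2) = (1 - ξ)⁻¹ := by
        rw [← Real.rpow_add h1ξ]
        norm_num
        rw [show (-1 : ℝ) = -(1 : ℝ) from rfl, Real.rpow_neg h1ξ.le, Real.rpow_one]
      have hrpos : 0 < (1 - ξ) ^ (-((0 : ℕ) : ℝ) - 1 / 2) := Real.rpow_pos_of_pos h1ξ _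
      have hSpos : 0 < S := tsum_dd_pos hξ
      have heq : S * S = (1 - ξ) ^ (-((0 : ℕ) : ℝ) - 1 / 2) * (1 - ξ) ^ (-((0 : ℕ) : ℝ) - 1 / 2) := by
        rw [hsq, hr]
      rcases mul_self_eq_mul_self_iff.mp heq with h | h
      · rw [hSdef] at h ⊢
        rw [h]; congr 1; push_cast; ring
      · exfalso; rw [h] at hSpos; linarith
  | succ i ih =>
      have hgeom : Summable fun n : ℕ => ‖ξ ^ n‖ := summable_norm_geometric_of_norm_lt_one hξ'
      have hnorm : Summable fun a => ‖dd i a * ξ ^ a‖ := summable_dd_norm i hξ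
      have hmul : (∑' a, dd i a * ξ ^ a) * (∑' n : ℕ, ξ ^ n) = ∑' a, dd (i + 1) a * ξ ^ a := by
        rw [tsum_mul_tsum_eq_tsum_sum_range_of_summable_norm hnorm hgeom]
        refine tsum_congr fun n => ?_
        have h1 : ∀ b ∈ range (n + 1), (dd i b * ξ ^ b) * ξ ^ (n - b) = dd i b * ξ ^ n := by
          intro b hb
          have hb' : b ≤ n := Nat.lt_succ_iff.mp (Finset.mem_range.mp hb)
          rw [mul_assoc, ← pow_add, Nat.add_sub_cancel' hb']
        rw [Finset.sum_congr rfl h1, ← Finset.sum_mul, sum_dd]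
      rw [← hmul, ih, tsum_geometric_of_norm_lt_one hξ']
      rw [show (1 - ξ)⁻¹ = (1 - ξ) ^ (-1 : ℝ) by
        rw [show (-1 : ℝ) = -(1 : ℝ) from rfl, Real.rpow_neg h1ξ.le, Real.rpow_one]]
      rw [← Real.rpow_add h1ξ]
      congr 1
      push_cast
      ring

lemma e_eq_dd (i a : ℕ) :
    ((Nat.choose (2 * a + 2 * i) (a + i) * Nat.choose (a + i) i : ℝ) /
      (4 ^ a * Nat.choose (2 * i) i)) = dd i a := by
  induction a with
  | zero =>
      have h : (Nat.choose (2 * 0 + 2 * i) (0 + i) : ℝ) = (Nat.choose (2 * i) i : ℝ) := by norm_num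
      have hK : (Nat.choose (2 * i) i : ℝ) ≠ 0 := by
        exact_mod_cast Nat.choose_pos (by omega) |>.ne'
      simp [dd_zero, Nat.choose_self]
      exact_mod_cast hK
  | succ a ih =>
      set m := a + i with hm
      -- cast facts
      have h1 : ((m : ℝ) + 1) * (Nat.choose (2 * m + 2) (m + 1) : ℝ) =
          2 * (2 * m + 1) * (Nat.choose (2 * m) m : ℝ) := by
        have := Nat.succ_mul_centralBinom_succ m
        simp only [Nat.centralBinom] at this
        have := congrArg (fun n : ℕ => (n : ℝ)) this
        push_cast at this
        convert this using 2 <;> push_cast <;> ring_nf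
      have h2 : ((a : ℝ) + 1) * (Nat.choose (m + 1) i : ℝ) =
          ((m : ℝ) + 1) * (Nat.choose m i : ℝ) := by
        have h := Nat.choose_mul_succ_eq m i
        have hsub : m + 1 - i = a + 1 := by omega
        rw [hsub] at h
        have := congrArg (fun n : ℕ => (n : ℝ)) h
        push_cast at this
        linarith
      have key : ((a : ℝ) + 1) * ((Nat.choose (2 * m + 2) (m + 1) : ℝ) * (Nat.choose (m + 1) i : ℝ)) =
          2 * (2 * m + 1) * ((Nat.choose (2 * m) m : ℝ) * (Nat.choose m i : ℝ)) := by
        have hm1 : ((m : ℝ) + 1) ≠ 0 := by positivity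
        apply mul_left_cancel₀ hm1
        calc ((m : ℝ) + 1) * (((a : ℝ) + 1) * ((Nat.choose (2 * m + 2) (m + 1) : ℝ) * (Nat.choose (m + 1) i : ℝ)))
            = (((m : ℝ) + 1) * (Nat.choose (2 * m + 2) (m + 1) : ℝ)) * (((a : ℝ) + 1) * (Nat.choose (m + 1) i : ℝ)) := by ring
          _ = (2 * (2 * m + 1) * (Nat.choose (2 * m) m : ℝ)) * (((m : ℝ) + 1) * (Nat.choose m i : ℝ)) := by rw [h1, h2]
          _ = ((m : ℝ) + 1) * (2 * (2 * m + 1) * ((Nat.choose (2 * m) m : ℝ) * (Nat.choose m i : ℝ))) := by ring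
      -- index normalizations
      have e1 : 2 * (a + 1) + 2 * i = 2 * m + 2 := by omega
      have e2 : a + 1 + i = m + 1 := by omega
      have e3 : 2 * a + 2 * i = 2 * m := by omega
      rw [e1, e2, dd_succ, ← ih, e3, hm]
      have hK : (Nat.choose (2 * i) i : ℝ) ≠ 0 := by
        exact_mod_cast (Nat.choose_pos (by omega : i ≤ 2 * i)).ne'
      have h4 : ((4 : ℝ)) ^ a ≠ 0 := by positivity
      have ha1 : ((a : ℝ) + 1) ≠ 0 := by positivity
      rw [pow_succ]
      field_simp
      push_cast
      push_cast [hm] at key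
      linear_combination 2 * key

theorem stmt5 (i : ℕ) (ξ : ℝ) (hξ : |ξ| < 1) :
    (1 - ξ) ^ (-((i : ℝ) + 1 / 2)) =
      ∑' a : ℕ,
        ((Nat.choose (2 * a + 2 * i) (a + i) * Nat.choose (a + i) i : ℝ) /
            (4 ^ a * Nat.choose (2 * i) i)) * ξ ^ a := by
  rw [← tsum_dd i hξ]
  exact (tsum_congr fun a => by rw [e_eq_dd i a]).symm
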